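/- Let p be a prime with p ≡ 3 (mod 4). Then in ℤ_p, Γ_p((2p+3)/4)·Γ_p(1/4) ≡ Γ_p((2p+1)/4)·Γ_p(3/4) (mod p²), where (2p+1)/4 and (2p+3)/4 denote the p-adic numbers obtained by dividing by the unit 4. -/

import Mathlib

open Finset Filter

/-- Morita's `p`-adic Gamma function at natural numbers:
`Γ_p(n) = (-1)^n ∏_{1 ≤ k < n, p ∤ k} k`. -/
noncomputable def pGammaNat (p : ℕ) [Fact p.Prime] (n : ℕ) : ℤ_[p] :=
  (-1) ^ n * ∏ k ∈ (Finset.range n).filter (fun k => ¬ p ∣ k), (k : ℤ_[p])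

/-- Morita's `p`-adic Gamma function on `ℤ_p`, the continuous extension of `pGammaNat`. -/
noncomputable def pGamma (p : ℕ) [Fact p.Prime] (x : ℤ_[p]) : ℤ_[p] :=
  limUnder (Filter.comap (Nat.cast : ℕ → ℤ_[p]) (nhds x)) (pGammaNat p)

/-- Extension of `pGamma` to `ℚ_p` (by `0` outside `ℤ_p`), used to take derivatives. -/
noncomputable def pGammaQ (p : ℕ) [Fact p.Prime] (x : ℚ_[p]) : ℚ_[p] :=
  if h : ‖x‖ ≤ 1 then (pGamma p ⟨x, h⟩ : ℚ_[p]) else 0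

namespace PGammaAux

variable {p : ℕ} [hp : Fact p.Prime]

/-- Square roots of one mod `p^k` are `±1` for `p` an odd prime. -/
lemma sq_eq_one {k : ℕ} (hodd : p ≠ 2) (x : ZMod (p ^ k)) (hx : x * x = 1) :
    x = 1 ∨ x = -1 := by
  haveI : NeZero (p ^ k) := ⟨pow_ne_zero _ hp.out.ne_zero⟩
  set v : ℤ := (x.val : ℤ) with hv
  have hcast : ((v : ℤ) : ZMod (p ^ k)) = x := by
    rw [hv]; push_cast; exact ZMod.natCast_zmod_val x
  have h1 : ((p : ℤ)) ^ k ∣ (v - 1) * (v + 1) := by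
    have : ((((v - 1) * (v + 1) : ℤ)) : ZMod (p ^ k)) = 0 := by
      push_cast [hcast]
      rw [sub_mul, one_mul, mul_add, hx]; ring
    have h0 := (ZMod.intCast_zmod_eq_zero_iff_dvd _ _).mp this
    rwa [Nat.cast_pow] at h0
  have hpZ : Prime (p : ℤ) := Nat.prime_iff_prime_int.mp hp.out
  by_cases hd : (p : ℤ) ∣ v + 1
  · have hnd : ¬ (p : ℤ) ∣ v - 1 := by
      intro hd'
      have h2' : (p : ℤ) ∣ 2 := by
        have he : (v + 1) - (v - 1) = 2 := by ring
        exact he ▸ dvd_sub hd hd'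
      have h2n : p ∣ 2 := by exact_mod_cast h2'
      have := (Nat.prime_dvd_prime_iff_eq hp.out Nat.prime_two).mp h2n
      exact hodd this
    have h2 : (p : ℤ) ^ k ∣ v + 1 := hpZ.pow_dvd_of_dvd_mul_left k hnd
      h1
    right
    have : (((v + 1 : ℤ)) : ZMod (p ^ k)) = 0 := by
      rw [ZMod.intCast_zmod_eq_zero_iff_dvd]; rwa [Nat.cast_pow]
    push_cast [hcast] at this
    linear_combination this
  · have h2 : (p : ℤ) ^ k ∣ v - 1 := hpZ.pow_dvd_of_dvd_mul_right k hd h1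
    left
    have : (((v - 1 : ℤ)) : ZMod (p ^ k)) = 0 := by
      rw [ZMod.intCast_zmod_eq_zero_iff_dvd]; rwa [Nat.cast_pow]
    push_cast [hcast] at this
    linear_combination this

/-- Product of all units of `ZMod N` is `-1`, provided square roots of 1 are `±1`. -/
lemma prod_units_eq_neg_one {N : ℕ} [NeZero N]
    (hsq : ∀ x : ZMod N, x * x = 1 → x = 1 ∨ x = -1) :
    ∏ u : (ZMod N)ˣ, u = (-1 : (ZMod N)ˣ) := by
  classical
  have husq : ∀ u : (ZMod N)ˣ, u⁻¹ = u → u = 1 ∨ u = -1 := by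
    intro u hu
    have h1 : (u : ZMod N) * u = 1 := by
      have := u.mul_inv
      rw [hu] at this
      exact_mod_cast this
    rcases hsq u h1 with h | h
    · left; ext; simpa using h
    · right; ext; simpa using h
  have key : (∏ x ∈ (univ : Finset (ZMod N)ˣ).erase (-1), x) = 1 := by
    refine prod_involution (fun x _ => x⁻¹) ?_ ?_ ?_ ?_
    · intro a _; exact mul_inv_cancel a
    · intro a ha hne
      intro h
      rcases husq a h with h1 | h1
      · exact hne h1
      · exact (Finset.ne_of_mem_erase ha) h1
    · intro a ha
      simp only [Finset.mem_erase, Finset.mem_univ, and_true]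
      intro h
      apply Finset.ne_of_mem_erase ha
      rw [← inv_inv a, h]; simp
    · intro a _; exact inv_inv a
  rw [← Finset.insert_erase (Finset.mem_univ (-1 : (ZMod N)ˣ)),
    Finset.prod_insert (Finset.notMem_erase _ _), key, mul_one]

/-- The "unit part" function: `j` if `p ∤ j`, else `1`, in `ZMod (p^k)`. -/
def gg (p : ℕ) (k : ℕ) (j : ℕ) : ZMod (p ^ k) := if p ∣ j then 1 else (j : ZMod (p ^ k))

lemma prod_gg_block (hodd : p ≠ 2) (k : ℕ) (n : ℕ) :
    ∏ i ∈ Finset.Ico n (n + p ^ k), gg p k i = -1 := by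
  rcases Nat.eq_zero_or_pos k with rfl | hk
  · have : Subsingleton (ZMod (p ^ 0)) := by rw [pow_zero]; infer_instance
    exact Subsingleton.elim _ _
  haveI : NeZero (p ^ k) := ⟨pow_ne_zero _ hp.out.ne_zero⟩
  classical
  have hdvd_iff : ∀ m : ℕ, IsUnit ((m : ZMod (p ^ k))) ↔ ¬ p ∣ m := by
    intro m
    rw [ZMod.isUnit_iff_coprime]
    rw [Nat.coprime_pow_right_iff hk, Nat.coprime_comm]
    exact hp.out.coprime_iff_not_dvd
  have step1 : ∏ i ∈ Finset.Ico n (n + p ^ k), gg p k i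
      = ∏ x : ZMod (p ^ k), (if IsUnit x then x else 1) := by
    rw [Finset.prod_Ico_eq_prod_range]
    have hlen : n + p ^ k - n = p ^ k := by omega
    rw [hlen]
    refine Finset.prod_nbij' (fun i => ((n + i : ℕ) : ZMod (p ^ k)))
      (fun x => (x - (n : ZMod (p ^ k))).val) ?_ ?_ ?_ ?_ ?_
    · intro a _; exact Finset.mem_univ _
    · intro x _; exact Finset.mem_range.mpr (ZMod.val_lt _)
    · intro a ha
      have ha' := Finset.mem_range.mp ha
      push_cast
      rw [add_sub_cancel_left]
      exact ZMod.val_natCast_of_lt ha'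
    · intro x _
      push_cast
      rw [ZMod.natCast_zmod_val]
      ring
    · intro a _
      unfold gg
      by_cases hd : p ∣ n + a
      · rw [if_pos hd, if_neg]
        rw [hdvd_iff]; exact fun h => h hd
      · rw [if_neg hd, if_pos ((hdvd_iff _).mpr hd)]
  rw [step1]
  have step2 : ∏ x : ZMod (p ^ k), (if IsUnit x then x else 1)
      = ∏ u : (ZMod (p ^ k))ˣ, (u : ZMod (p ^ k)) := by
    rw [← Finset.prod_filter]
    refine Finset.prod_nbij' (fun x => if h : IsUnit x then h.unit else 1)
      (fun u => (u : ZMod (p ^ k))) ?_ ?_ ?_ ?_ ?_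
    · intro x _; exact Finset.mem_univ _
    · intro u _
      simp [Finset.mem_filter, Units.isUnit]
    · intro x hx
      have hx' : IsUnit x := (Finset.mem_filter.mp hx).2
      simp [hx']
    · intro u _
      simp
    · intro x hx
      have hx' : IsUnit x := (Finset.mem_filter.mp hx).2
      simp [hx']
  rw [step2]
  have := PGammaAux.prod_units_eq_neg_one (N := p ^ k)
    (fun x hx => PGammaAux.sq_eq_one hodd x hx)
  calc ∏ u : (ZMod (p ^ k))ˣ, (u : ZMod (p ^ k))
      = ((∏ u : (ZMod (p ^ k))ˣ, u : (ZMod (p ^ k))ˣ) : ZMod (p ^ k)) :=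
        (map_prod (Units.coeHom (ZMod (p ^ k))) (fun u => u) Finset.univ).symm
    _ = ((-1 : (ZMod (p ^ k))ˣ) : ZMod (p ^ k)) := by rw [this]
    _ = -1 := by simp

lemma toZModPow_gammaNat (k m : ℕ) :
    PadicInt.toZModPow k (pGammaNat p m) = (-1) ^ m * ∏ j ∈ Finset.range m, gg p k j := by
  unfold pGammaNat
  rw [map_mul, map_pow, map_neg, map_one, map_prod]
  congr 1
  rw [Finset.prod_filter]
  refine Finset.prod_congr rfl ?_
  intro j _
  unfold gg
  by_cases hd : p ∣ j
  · rw [if_neg (by exact fun h => h hd), if_pos hd]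
  · rw [if_pos hd, if_neg hd, map_natCast]

lemma gammaNat_step (hodd : p ≠ 2) (k n : ℕ) :
    PadicInt.toZModPow k (pGammaNat p (n + p ^ k)) = PadicInt.toZModPow k (pGammaNat p n) := by
  rw [toZModPow_gammaNat, toZModPow_gammaNat]
  rw [← Finset.prod_range_mul_prod_Ico (gg p k) (Nat.le_add_right n (p ^ k))]
  rw [prod_gg_block hodd k n]
  have hoddpk : Odd (p ^ k) := (hp.out.odd_of_ne_two hodd).pow
  have hsign : ((-1 : ZMod (p ^ k)) ^ (n + p ^ k)) = (-1) ^ n * (-1) := by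
    rw [pow_add, hoddpk.neg_one_pow]
  rw [hsign]
  ring

lemma gammaNat_cong (hodd : p ≠ 2) {k m n : ℕ} (h : (m : ZMod (p ^ k)) = (n : ZMod (p ^ k))) :
    PadicInt.toZModPow k (pGammaNat p m) = PadicInt.toZModPow k (pGammaNat p n) := by
  have haux : ∀ (t m : ℕ),
      PadicInt.toZModPow k (pGammaNat p (m + t * p ^ k)) = PadicInt.toZModPow k (pGammaNat p m) := by
    intro t
    induction t with
    | zero => intro m; simp
    | succ t ih =>
      intro m
      have : m + (t + 1) * p ^ k = (m + t * p ^ k) + p ^ k := by ring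
      rw [this, gammaNat_step hodd, ih]
  have hpk : 0 < p ^ k := pow_pos hp.out.pos k
  rcases le_total m n with hmn | hmn
  · have hdvd : p ^ k ∣ n - m := (Nat.modEq_iff_dvd' hmn).mp ((ZMod.natCast_eq_natCast_iff _ _ _).mp h)
    obtain ⟨t, ht⟩ := hdvd
    have : n = m + t * p ^ k := by rw [mul_comm]; omega
    rw [this, haux]
  · have hdvd : p ^ k ∣ m - n := (Nat.modEq_iff_dvd' hmn).mp ((ZMod.natCast_eq_natCast_iff _ _ _).mp h.symm)
    obtain ⟨t, ht⟩ := hdvd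
    have : m = n + t * p ^ k := by rw [mul_comm]; omega
    rw [this, haux]

lemma toZModPow_eq_iff' (k : ℕ) (x y : ℤ_[p]) :
    PadicInt.toZModPow k x = PadicInt.toZModPow k y ↔
      x - y ∈ Ideal.span {(p : ℤ_[p]) ^ k} := by
  rw [← PadicInt.ker_toZModPow, RingHom.mem_ker, map_sub, sub_eq_zero]

lemma toZModPow_eq_iff (k : ℕ) (x y : ℤ_[p]) :
    PadicInt.toZModPow k x = PadicInt.toZModPow k y ↔ ‖x - y‖ ≤ (p : ℝ) ^ (-(k : ℤ)) := by
  rw [toZModPow_eq_iff', PadicInt.norm_le_pow_iff_mem_span_pow]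

lemma gammaNat_dist (hodd : p ≠ 2) {k m n : ℕ} (h : (m : ZMod (p ^ k)) = (n : ZMod (p ^ k))) :
    ‖pGammaNat p m - pGammaNat p n‖ ≤ (p : ℝ) ^ (-(k : ℤ)) := by
  rw [← toZModPow_eq_iff]
  exact gammaNat_cong hodd h

lemma neBot_comap (x : ℤ_[p]) : (Filter.comap (Nat.cast : ℕ → ℤ_[p]) (nhds x)).NeBot := by
  rw [comap_neBot_iff]
  intro t ht
  rcases Metric.mem_nhds_iff.mp ht with ⟨ε, hε, hsub⟩
  rcases Metric.denseRange_iff.mp PadicInt.denseRange_natCast x ε hε with ⟨n, hn⟩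
  exact ⟨n, hsub (by simpa [Metric.mem_ball, dist_comm] using hn)⟩

lemma pow_neg_lt (k : ℕ) : (0 : ℝ) < (p : ℝ) ^ (-(k : ℤ)) :=
  zpow_pos (by exact_mod_cast hp.out.pos) _

lemma tendsto_pow_neg : Tendsto (fun k : ℕ => (p : ℝ) ^ (-(k : ℤ))) atTop (nhds 0) := by
  have hrw : (fun k : ℕ => (p : ℝ) ^ (-(k : ℤ))) = fun k : ℕ => ((p : ℝ)⁻¹) ^ k := by
    funext k
    rw [inv_pow, ← zpow_natCast, ← zpow_neg]
  rw [hrw]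
  apply tendsto_pow_atTop_nhds_zero_of_lt_one
  · positivity
  · rw [inv_lt_one_iff₀]
    right
    exact_mod_cast hp.out.one_lt

lemma appr_cong (x : ℤ_[p]) {k n : ℕ} (hkn : k ≤ n) :
    PadicInt.toZModPow k ((x.appr n : ℤ_[p])) = PadicInt.toZModPow k x := by
  rw [toZModPow_eq_iff']
  have h1 := x.appr_spec n
  have h2 : Ideal.span {(p : ℤ_[p]) ^ n} ≤ Ideal.span {(p : ℤ_[p]) ^ k} :=
    Ideal.span_singleton_le_span_singleton.mpr (pow_dvd_pow _ hkn)
  have := h2 h1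
  have hneg : (x.appr n : ℤ_[p]) - x = -(x - x.appr n) := by ring
  rw [hneg]
  exact neg_mem this

lemma tendsto_gammaNat (hodd : p ≠ 2) (x : ℤ_[p]) :
    Tendsto (pGammaNat p) (Filter.comap (Nat.cast : ℕ → ℤ_[p]) (nhds x))
      (nhds (pGamma p x)) := by
  haveI := neBot_comap x
  set u : ℕ → ℤ_[p] := fun n => pGammaNat p (x.appr n) with hu
  have hdistu : ∀ (k m n : ℕ), k ≤ m → k ≤ n → dist (u m) (u n) ≤ (p : ℝ) ^ (-(k : ℤ)) := by
    intro k m n hm hn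
    rw [dist_eq_norm]
    apply gammaNat_dist hodd
    have h1 : PadicInt.toZModPow k ((x.appr m : ℤ_[p])) = PadicInt.toZModPow k ((x.appr n : ℤ_[p])) := by
      rw [appr_cong x hm, appr_cong x hn]
    rwa [map_natCast, map_natCast] at h1
  have hcauchy : CauchySeq u := by
    apply cauchySeq_of_le_tendsto_0 (fun k : ℕ => (p : ℝ) ^ (-(k : ℤ)))
      (fun m n k hm hn => hdistu k m n hm hn) tendsto_pow_neg
  obtain ⟨L, hL⟩ := cauchySeq_tendsto_of_complete hcauchy
  have hmain : Tendsto (pGammaNat p) (Filter.comap (Nat.cast : ℕ → ℤ_[p]) (nhds x)) (nhds L) := by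
    rw [Metric.tendsto_nhds]
    intro ε hε
    obtain ⟨k, hk⟩ : ∃ k : ℕ, 2 * (p : ℝ) ^ (-(k : ℤ)) < ε := by
      have h2 : Tendsto (fun k : ℕ => 2 * (p : ℝ) ^ (-(k : ℤ))) atTop (nhds 0) := by
        simpa using tendsto_pow_neg.const_mul (2 : ℝ)
      have := (h2.eventually (eventually_lt_nhds hε)).exists
      simpa using this
    have hball : {m : ℕ | dist ((m : ℤ_[p])) x ≤ (p : ℝ) ^ (-(k : ℤ))} ∈
        Filter.comap (Nat.cast : ℕ → ℤ_[p]) (nhds x) := by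
      have h0 : (Nat.cast : ℕ → ℤ_[p]) ⁻¹' (Metric.closedBall x ((p : ℝ) ^ (-(k : ℤ)))) ∈
          Filter.comap (Nat.cast : ℕ → ℤ_[p]) (nhds x) :=
        Filter.preimage_mem_comap (Metric.closedBall_mem_nhds x (pow_neg_lt k))
      exact h0
    filter_upwards [hball] with m hm
    have hm' : PadicInt.toZModPow k ((m : ℤ_[p])) = PadicInt.toZModPow k x := by
      rw [toZModPow_eq_iff]
      rwa [dist_eq_norm] at hm
    have hmzk : (m : ZMod (p ^ k)) = ((x.appr k : ℕ) : ZMod (p ^ k)) := by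
      have := hm'.trans (appr_cong x (le_refl k)).symm
      rwa [map_natCast, map_natCast] at this
    have h1 : dist (pGammaNat p m) (u k) ≤ (p : ℝ) ^ (-(k : ℤ)) := by
      rw [dist_eq_norm]
      exact gammaNat_dist hodd hmzk
    have h2 : dist (u k) L ≤ (p : ℝ) ^ (-(k : ℤ)) := by
      have hev : ∀ᶠ n in atTop, dist (u k) (u n) ≤ (p : ℝ) ^ (-(k : ℤ)) := by
        rw [eventually_atTop]
        exact ⟨k, fun n hn => hdistu k k n le_rfl hn⟩
      exact le_of_tendsto (tendsto_const_nhds.dist hL) hev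
    calc dist (pGammaNat p m) L ≤ dist (pGammaNat p m) (u k) + dist (u k) L := dist_triangle _ _ _
      _ ≤ (p : ℝ) ^ (-(k : ℤ)) + (p : ℝ) ^ (-(k : ℤ)) := add_le_add h1 h2
      _ = 2 * (p : ℝ) ^ (-(k : ℤ)) := by ring
      _ < ε := hk
  have : pGamma p x = L := hmain.limUnder_eq
  rw [this]
  exact hmain

lemma pGamma_cong (hodd : p ≠ 2) (x : ℤ_[p]) (n k : ℕ)
    (h : PadicInt.toZModPow k x = ((n : ℕ) : ZMod (p ^ k))) :
    PadicInt.toZModPow k (pGamma p x) = PadicInt.toZModPow k (pGammaNat p n) := by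
  haveI := neBot_comap x
  have ht := tendsto_gammaNat hodd x
  have hev : ∀ᶠ m in Filter.comap (Nat.cast : ℕ → ℤ_[p]) (nhds x),
      pGammaNat p m ∈ Metric.closedBall (pGammaNat p n) ((p : ℝ) ^ (-(k : ℤ))) := by
    have hball : {m : ℕ | dist ((m : ℤ_[p])) x ≤ (p : ℝ) ^ (-(k : ℤ))} ∈
        Filter.comap (Nat.cast : ℕ → ℤ_[p]) (nhds x) := by
      have h0 : (Nat.cast : ℕ → ℤ_[p]) ⁻¹' (Metric.closedBall x ((p : ℝ) ^ (-(k : ℤ)))) ∈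
          Filter.comap (Nat.cast : ℕ → ℤ_[p]) (nhds x) :=
        Filter.preimage_mem_comap (Metric.closedBall_mem_nhds x (pow_neg_lt k))
      exact h0
    filter_upwards [hball] with m hm
    have hm' : PadicInt.toZModPow k ((m : ℤ_[p])) = PadicInt.toZModPow k x := by
      rw [toZModPow_eq_iff]
      rwa [dist_eq_norm] at hm
    have hmzk : (m : ZMod (p ^ k)) = ((n : ℕ) : ZMod (p ^ k)) := by
      have := hm'.trans h
      rwa [map_natCast] at this
    rw [Metric.mem_closedBall, dist_eq_norm]
    exact gammaNat_dist hodd hmzk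
  have hmem := Metric.isClosed_closedBall.mem_of_tendsto ht hev
  rw [Metric.mem_closedBall, dist_eq_norm, ← toZModPow_eq_iff] at hmem
  exact hmem

def AAn (u : ℕ) : ℕ := 12*(u*u)+18*u+7
def BBn (u : ℕ) : ℕ := 4*(u*u)+6*u+3
def CCn (u : ℕ) : ℕ := 8*(u*u)+14*u+6
def HHn (u : ℕ) : ℕ := 2*u+2

lemma sum_inv_zero (u : ℕ) (hp4 : p = 4*u+3) :
    ∑ j ∈ Finset.Ico (BBn u) (AAn u), (if p ∣ j then 0 else ((j : ZMod p))⁻¹) = 0 := by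
  obtain ⟨w, hw⟩ : ∃ w, w = u * u := ⟨u*u, rfl⟩
  have hA : AAn u = 12*w+18*u+7 := by rw [hw]; rfl
  have hB : BBn u = 4*w+6*u+3 := by rw [hw]; rfl
  have hp2 : p^2 = 16*w+24*u+9 := by rw [hp4, hw]; ring
  refine Finset.sum_involution (fun j _ => p^2 - j) ?_ ?_ ?_ ?_
  · intro j hj
    have hj' := Finset.mem_Ico.mp hj
    have hjle : j ≤ p^2 := by omega
    by_cases hd : p ∣ j
    · have hd2 : p ∣ p^2 - j := Nat.dvd_sub (dvd_pow_self p two_ne_zero) hd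
      rw [if_pos hd, if_pos hd2]; ring
    · have hnd : ¬ p ∣ p^2 - j := by
        intro h
        apply hd
        have hj2 : j = p^2 - (p^2 - j) := by omega
        rw [hj2]
        exact Nat.dvd_sub (dvd_pow_self p two_ne_zero) h
      rw [if_neg hd, if_neg hnd]
      have hcast : ((p^2 - j : ℕ) : ZMod p) = -(j : ZMod p) := by
        rw [Nat.cast_sub hjle]
        push_cast
        rw [ZMod.natCast_self]
        ring
      rw [hcast, inv_neg]
      ring
  · intro j hj _
    have hj' := Finset.mem_Ico.mp hj
    omega
  · intro j hj
    have hj' := Finset.mem_Ico.mp hj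
    rw [Finset.mem_Ico]
    omega
  · intro j hj
    have hj' := Finset.mem_Ico.mp hj
    omega

lemma p_dvd_T (u : ℕ) (hp4 : p = 4*u+3) :
    p ∣ ∑ j ∈ (Finset.Ico (BBn u) (AAn u)).filter (fun j => ¬ p ∣ j),
      ∏ i ∈ ((Finset.Ico (BBn u) (AAn u)).filter (fun j => ¬ p ∣ j)).erase j, i := by
  haveI : NeZero p := ⟨hp.out.ne_zero⟩
  classical
  set S := (Finset.Ico (BBn u) (AAn u)).filter (fun j => ¬ p ∣ j) with hS
  rw [← ZMod.natCast_eq_zero_iff]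
  push_cast
  have hstep : ∀ j ∈ S, ∏ i ∈ S.erase j, (i : ZMod p)
      = (j : ZMod p)⁻¹ * ∏ i ∈ S, (i : ZMod p) := by
    intro j hj
    have hjd : ¬ p ∣ j := (Finset.mem_filter.mp hj).2
    have hj0 : (j : ZMod p) ≠ 0 := by
      rw [Ne, ZMod.natCast_eq_zero_iff]
      exact hjd
    rw [← Finset.mul_prod_erase S (fun i => (i : ZMod p)) hj, inv_mul_cancel_left₀ hj0]
  rw [Finset.sum_congr rfl hstep, ← Finset.sum_mul]
  have hsum : ∑ j ∈ S, ((j : ZMod p))⁻¹ = 0 := by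
    rw [hS, Finset.sum_filter]
    calc ∑ j ∈ Finset.Ico (BBn u) (AAn u), (if ¬ p ∣ j then ((j : ZMod p))⁻¹ else 0)
        = ∑ j ∈ Finset.Ico (BBn u) (AAn u), (if p ∣ j then 0 else ((j : ZMod p))⁻¹) := by
          refine Finset.sum_congr rfl ?_
          intro j _
          by_cases hd : p ∣ j
          · rw [if_neg (by exact fun h => h hd), if_pos hd]
          · rw [if_pos hd, if_neg hd]
      _ = 0 := sum_inv_zero u hp4
  rw [hsum, zero_mul]

lemma T_insert (x : ℕ) (S : Finset ℕ) (hx : x ∉ S) :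
    ∑ j ∈ insert x S, ∏ i ∈ (insert x S).erase j, i
      = ∏ i ∈ S, i + x * ∑ j ∈ S, ∏ i ∈ S.erase j, i := by
  classical
  rw [Finset.sum_insert hx, Finset.erase_insert hx, Finset.mul_sum]
  congr 1
  refine Finset.sum_congr rfl ?_
  intro j hj
  have hjx : x ≠ j := by rintro rfl; exact hx hj
  rw [Finset.erase_insert_of_ne hjx,
    Finset.prod_insert (fun h => hx (Finset.mem_of_mem_erase h))]

lemma prod_add_expand (c : ℕ) (S : Finset ℕ) : ∃ R : ℕ,
    ∏ j ∈ S, (j + c) = ∏ j ∈ S, j + c * (∑ j ∈ S, ∏ i ∈ S.erase j, i) + c^2 * R := by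
  classical
  induction S using Finset.induction_on with
  | empty => exact ⟨0, by simp⟩
  | @insert x S hx ih =>
    obtain ⟨R, hR⟩ := ih
    refine ⟨x * R + (∑ j ∈ S, ∏ i ∈ S.erase j, i) + c * R, ?_⟩
    rw [Finset.prod_insert hx, Finset.prod_insert hx, hR, T_insert x S hx]
    ring

lemma prod_shift (u : ℕ) (hp4 : p = 4*u+3) :
    ∏ j ∈ (Finset.Ico (BBn u) (AAn u)).filter (fun j => ¬ p ∣ j), ((j + CCn u : ℕ) : ZMod (p^2))
      = ∏ j ∈ (Finset.Ico (BBn u) (AAn u)).filter (fun j => ¬ p ∣ j), (j : ZMod (p^2)) := by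
  haveI : NeZero (p^2) := ⟨pow_ne_zero _ hp.out.ne_zero⟩
  classical
  set S := (Finset.Ico (BBn u) (AAn u)).filter (fun j => ¬ p ∣ j) with hS
  obtain ⟨R, hR⟩ := prod_add_expand (CCn u) S
  have hCp : CCn u = p * HHn u := by rw [hp4]; unfold CCn HHn; ring
  obtain ⟨t, ht⟩ := p_dvd_T u hp4
  have hCT : p^2 ∣ CCn u * ∑ j ∈ S, ∏ i ∈ S.erase j, i := by
    rw [hS] at *
    refine ⟨HHn u * t, ?_⟩
    rw [hCp, ht]
    ring
  have hC2 : p^2 ∣ CCn u ^ 2 * R := ⟨HHn u ^2 * R, by rw [hCp]; ring⟩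
  calc ∏ j ∈ S, ((j + CCn u : ℕ) : ZMod (p^2))
      = ((∏ j ∈ S, (j + CCn u) : ℕ) : ZMod (p^2)) := by push_cast; rfl
    _ = ((∏ j ∈ S, j : ℕ) : ZMod (p^2)) + ((CCn u * ∑ j ∈ S, ∏ i ∈ S.erase j, i : ℕ) : ZMod (p^2))
        + ((CCn u ^2 * R : ℕ) : ZMod (p^2)) := by rw [hR]; push_cast; ring
    _ = ∏ j ∈ S, (j : ZMod (p^2)) := by
        rw [(ZMod.natCast_eq_zero_iff _ _).mpr hCT,
          (ZMod.natCast_eq_zero_iff _ _).mpr hC2]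
        push_cast
        ring

lemma G_eq (u : ℕ) (hp4 : p = 4*u+3) :
    ∏ j ∈ Finset.Ico (BBn u + CCn u) (AAn u + CCn u), gg p 2 j
      = ∏ j ∈ Finset.Ico (BBn u) (AAn u), gg p 2 j := by
  classical
  have hCp : CCn u = p * HHn u := by rw [hp4]; unfold CCn HHn; ring
  have hpC : p ∣ CCn u := ⟨HHn u, hCp⟩
  have hfil : ∀ m n : ℕ, ∏ j ∈ Finset.Ico m n, gg p 2 j
      = ∏ j ∈ (Finset.Ico m n).filter (fun j => ¬ p ∣ j), (j : ZMod (p^2)) := by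
    intro m n
    rw [Finset.prod_filter]
    refine Finset.prod_congr rfl ?_
    intro j _
    unfold gg
    by_cases hd : p ∣ j
    · rw [if_pos hd, if_neg (by exact fun h => h hd)]
    · rw [if_neg hd, if_pos hd]
  rw [hfil, hfil, ← prod_shift u hp4]
  refine Finset.prod_nbij' (fun j => j - CCn u) (fun j => j + CCn u) ?_ ?_ ?_ ?_ ?_
  · intro a ha
    rw [Finset.mem_filter, Finset.mem_Ico] at ha ⊢
    obtain ⟨⟨h1, h2⟩, h3⟩ := ha
    refine ⟨⟨by omega, by omega⟩, ?_⟩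
    intro h
    apply h3
    have : a = (a - CCn u) + CCn u := by omega
    rw [this]
    exact Nat.dvd_add h hpC
  · intro a ha
    rw [Finset.mem_filter, Finset.mem_Ico] at ha ⊢
    obtain ⟨⟨h1, h2⟩, h3⟩ := ha
    refine ⟨⟨by omega, by omega⟩, ?_⟩
    intro h
    exact h3 ((Nat.dvd_add_right hpC).mp (by rwa [add_comm] at h))
  · intro a ha
    rw [Finset.mem_filter, Finset.mem_Ico] at ha
    omega
  · intro a _
    omega
  · intro a ha
    rw [Finset.mem_filter, Finset.mem_Ico] at ha
    congr 1
    omega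

lemma key_prod (u : ℕ) (hp4 : p = 4*u+3) :
    (∏ j ∈ Finset.range (BBn u + CCn u), gg p 2 j) * ∏ j ∈ Finset.range (AAn u), gg p 2 j
      = (∏ j ∈ Finset.range (AAn u + CCn u), gg p 2 j) * ∏ j ∈ Finset.range (BBn u), gg p 2 j := by
  obtain ⟨w, hw⟩ : ∃ w, w = u * u := ⟨u*u, rfl⟩
  have hA : AAn u = 12*w+18*u+7 := by rw [hw]; rfl
  have hB : BBn u = 4*w+6*u+3 := by rw [hw]; rfl
  have hC : CCn u = 8*w+14*u+6 := by rw [hw]; rfl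
  have hBA : BBn u ≤ AAn u := by omega
  have hBBC : BBn u ≤ BBn u + CCn u := Nat.le_add_right _ _
  have hBAC : BBn u ≤ AAn u + CCn u := by omega
  have hBCAC : BBn u + CCn u ≤ AAn u + CCn u := by omega
  have hABC : AAn u ≤ BBn u + CCn u := by omega
  have e1 := (Finset.prod_range_mul_prod_Ico (gg p 2) hBA).symm
  have e2 := (Finset.prod_range_mul_prod_Ico (gg p 2) hBBC).symm
  have e3 := (Finset.prod_range_mul_prod_Ico (gg p 2) hBAC).symm
  have e4 := (Finset.prod_Ico_consecutive (gg p 2) hBBC hBCAC).symm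
  rw [e1, e2, e3, e4, G_eq u hp4]
  ring

lemma key_gamma (u : ℕ) (hp4 : p = 4*u+3) :
    PadicInt.toZModPow 2 (pGammaNat p (BBn u + CCn u)) * PadicInt.toZModPow 2 (pGammaNat p (AAn u))
      = PadicInt.toZModPow 2 (pGammaNat p (AAn u + CCn u)) * PadicInt.toZModPow 2 (pGammaNat p (BBn u)) := by
  rw [toZModPow_gammaNat, toZModPow_gammaNat, toZModPow_gammaNat, toZModPow_gammaNat]
  calc ((-1) ^ (BBn u + CCn u) * ∏ j ∈ Finset.range (BBn u + CCn u), gg p 2 j)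
        * ((-1) ^ (AAn u) * ∏ j ∈ Finset.range (AAn u), gg p 2 j)
      = (-1) ^ ((BBn u + CCn u) + AAn u)
          * ((∏ j ∈ Finset.range (BBn u + CCn u), gg p 2 j) * ∏ j ∈ Finset.range (AAn u), gg p 2 j) := by
        rw [pow_add]; ring
    _ = (-1) ^ ((AAn u + CCn u) + BBn u)
          * ((∏ j ∈ Finset.range (AAn u + CCn u), gg p 2 j) * ∏ j ∈ Finset.range (BBn u), gg p 2 j) := by
        rw [show (BBn u + CCn u) + AAn u = (AAn u + CCn u) + BBn u by ring, key_prod u hp4]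
    _ = ((-1) ^ (AAn u + CCn u) * ∏ j ∈ Finset.range (AAn u + CCn u), gg p 2 j)
          * ((-1) ^ (BBn u) * ∏ j ∈ Finset.range (BBn u), gg p 2 j) := by
        rw [pow_add]; ring

end PGammaAux

theorem pGamma_shift_congr (p : ℕ) [Fact p.Prime] (h4 : p % 4 = 3)
    (q half : ℤ_[p]) (hq : 4 * q = 1) (hhalf : 2 * half = 1) :
    (p : ℤ_[p]) ^ 2 ∣
      (pGamma p (3 * q + (p : ℤ_[p]) * half) * pGamma p q
        - pGamma p (q + (p : ℤ_[p]) * half) * pGamma p (3 * q)) := by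
  have hprime : p.Prime := Fact.out
  have hodd : p ≠ 2 := by rintro rfl; omega
  obtain ⟨u, hp4⟩ : ∃ u, p = 4 * u + 3 := ⟨p / 4, by omega⟩
  haveI : NeZero (p ^ 2) := ⟨pow_ne_zero _ hprime.ne_zero⟩
  set φ := PadicInt.toZModPow (p := p) 2 with hφ
  -- 4 is a unit mod p^2
  have h2ndvd : ¬ (2 ∣ p) := by omega
  have hcop : Nat.Coprime 4 (p ^ 2) := by
    have h1 : Nat.Coprime 2 p := (Nat.prime_two.coprime_iff_not_dvd).mpr h2ndvd
    have h2 : Nat.Coprime (2 ^ 2) (p ^ 2) := Nat.Coprime.pow 2 2 h1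
    have h3 : (2 : ℕ) ^ 2 = 4 := by norm_num
    rwa [h3] at h2
  have h4unit : IsUnit ((4 : ℕ) : ZMod (p ^ 2)) := (ZMod.isUnit_iff_coprime 4 (p ^ 2)).mpr hcop
  have hp0 : ((p : ZMod (p ^ 2))) ^ 2 = 0 := by
    rw [← Nat.cast_pow, ZMod.natCast_self]
  -- numerical values of 4 * (the chosen naturals) mod p^2
  have hA4 : ((4 * PGammaAux.AAn u : ℕ) : ZMod (p ^ 2)) = 1 := by
    have he : 4 * PGammaAux.AAn u = 3 * p ^ 2 + 1 := by
      rw [hp4]; unfold PGammaAux.AAn; ring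
    rw [he]; push_cast; rw [hp0]; ring
  have hB4 : ((4 * PGammaAux.BBn u : ℕ) : ZMod (p ^ 2)) = 3 := by
    have he : 4 * PGammaAux.BBn u = p ^ 2 + 3 := by
      rw [hp4]; unfold PGammaAux.BBn; ring
    rw [he]; push_cast; rw [hp0]; ring
  have hAC4 : ((4 * (PGammaAux.AAn u + PGammaAux.CCn u) : ℕ) : ZMod (p ^ 2))
      = 1 + 2 * (p : ZMod (p ^ 2)) := by
    have he : 4 * (PGammaAux.AAn u + PGammaAux.CCn u) = 5 * p ^ 2 + 2 * p + 1 := by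
      rw [hp4]; unfold PGammaAux.AAn PGammaAux.CCn; ring
    rw [he]; push_cast; rw [hp0]; ring
  have hBC4 : ((4 * (PGammaAux.BBn u + PGammaAux.CCn u) : ℕ) : ZMod (p ^ 2))
      = 3 + 2 * (p : ZMod (p ^ 2)) := by
    have he : 4 * (PGammaAux.BBn u + PGammaAux.CCn u) = 3 * p ^ 2 + 2 * p + 3 := by
      rw [hp4]; unfold PGammaAux.BBn PGammaAux.CCn; ring
    rw [he]; push_cast; rw [hp0]; ring
  -- φ values of the four points
  have hcancel : ∀ (x : ℤ_[p]) (n : ℕ),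
      ((4 : ℕ) : ZMod (p ^ 2)) * φ x = ((4 * n : ℕ) : ZMod (p ^ 2)) →
        φ x = ((n : ℕ) : ZMod (p ^ 2)) := by
    intro x n h
    apply h4unit.mul_left_cancel
    rw [h]; push_cast; ring
  have hfour : ∀ x : ℤ_[p], ((4 : ℕ) : ZMod (p ^ 2)) * φ x = φ (4 * x) := by
    intro x
    have h44 : (4 : ℤ_[p]) = ((4 : ℕ) : ℤ_[p]) := by norm_num
    rw [map_mul, h44, map_natCast]
  have ht1 : φ q = ((PGammaAux.AAn u : ℕ) : ZMod (p ^ 2)) := by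
    apply hcancel
    rw [hfour, hq, map_one, hA4]
  have ht2 : φ (3 * q) = ((PGammaAux.BBn u : ℕ) : ZMod (p ^ 2)) := by
    apply hcancel
    have he : (4 : ℤ_[p]) * (3 * q) = 3 := by linear_combination (3 : ℤ_[p]) * hq
    rw [hfour, he, hB4, map_ofNat]
  have ht3 : φ (q + (p : ℤ_[p]) * half) = ((PGammaAux.AAn u + PGammaAux.CCn u : ℕ) : ZMod (p ^ 2)) := by
    apply hcancel
    have he : (4 : ℤ_[p]) * (q + (p : ℤ_[p]) * half) = 1 + 2 * (p : ℤ_[p]) := by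
      linear_combination hq + 2 * (p : ℤ_[p]) * hhalf
    rw [hfour, he, hAC4, map_add, map_one, map_mul, map_natCast, map_ofNat]
  have ht4 : φ (3 * q + (p : ℤ_[p]) * half)
      = ((PGammaAux.BBn u + PGammaAux.CCn u : ℕ) : ZMod (p ^ 2)) := by
    apply hcancel
    have he : (4 : ℤ_[p]) * (3 * q + (p : ℤ_[p]) * half) = 3 + 2 * (p : ℤ_[p]) := by
      linear_combination (3 : ℤ_[p]) * hq + 2 * (p : ℤ_[p]) * hhalf
    rw [hfour, he, hBC4, map_add, map_mul, map_natCast, map_ofNat, map_ofNat]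
  -- transfer to pGammaNat values
  have hg1 := PGammaAux.pGamma_cong hodd q (PGammaAux.AAn u) 2 ht1
  have hg2 := PGammaAux.pGamma_cong hodd (3 * q) (PGammaAux.BBn u) 2 ht2
  have hg3 := PGammaAux.pGamma_cong hodd (q + (p : ℤ_[p]) * half)
    (PGammaAux.AAn u + PGammaAux.CCn u) 2 ht3
  have hg4 := PGammaAux.pGamma_cong hodd (3 * q + (p : ℤ_[p]) * half)
    (PGammaAux.BBn u + PGammaAux.CCn u) 2 ht4
  -- conclude
  rw [← Ideal.mem_span_singleton, ← PadicInt.ker_toZModPow 2, RingHom.mem_ker, map_sub,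
    map_mul, map_mul]
  rw [hg1, hg2, hg3, hg4, sub_eq_zero]
  exact PGammaAux.key_gamma u hp4
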